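/- Let f be a symmetric submodular set function over a finite ground set V and let A_1, …, A_k be subsets of V. Then there exist sets A'_1, …, A'_k such that (i) A'_i ⊆ A_i for 1 ≤ i ≤ k, (ii) A'_1, …, A'_k are mutually disjoint, (iii) ∪_i A'_i = ∪_i A_i, and (iv) Σ_{i=1}^k f(A'_i) ≤ Σ_{i=1}^k f(A_i). -/

import Mathlib

open scoped BigOperators

private lemma uncross_key {V : Type*} [Fintype V] [DecidableEq V] (f : Finset V → ℝ)
    (hsub : ∀ A B : Finset V, f A + f B ≥ f (A ∪ B) + f (A ∩ B))
    (hsym : ∀ A : Finset V, f A = f (Finset.univ \ A))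
    (A B : Finset V) : f (A \ B) + f (B \ A) ≤ f A + f B := by
  have h := hsub A (Finset.univ \ B)
  have e1 : A ∪ (Finset.univ \ B) = Finset.univ \ (B \ A) := by
    ext y; simp only [Finset.mem_union, Finset.mem_sdiff, Finset.mem_univ, true_and]; tauto
  have e2 : A ∩ (Finset.univ \ B) = A \ B := by
    ext y
    simp only [Finset.mem_inter, Finset.mem_sdiff, Finset.mem_univ, true_and]
  rw [e1, e2] at h
  have h2 := hsym B
  have h3 := hsym (B \ A)
  linarith

private lemma uncross_step {V : Type*} [Fintype V] [DecidableEq V] (f : Finset V → ℝ)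
    {k : ℕ} (A : Fin k → Finset V) (i j : Fin k) (hij : i ≠ j) (x : V)
    (hxi : x ∈ A i) (hxj : x ∈ A j) (hf : f (A j \ A i) ≤ f (A j)) :
    ∃ B : Fin k → Finset V, (∀ l, B l ⊆ A l) ∧
      (Finset.univ.biUnion B = Finset.univ.biUnion A) ∧
      (∑ l, f (B l) ≤ ∑ l, f (A l)) ∧
      (∑ l, (B l).card < ∑ l, (A l).card) := by
  classical
  set v := A j \ A i with hv
  refine ⟨Function.update A j v, ?_, ?_, ?_, ?_⟩
  · intro l
    rcases eq_or_ne l j with h | hl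
    · subst h; rw [Function.update_self]; exact Finset.sdiff_subset
    · simp [Function.update_of_ne hl]
  · ext y
    simp only [Finset.mem_biUnion, Finset.mem_univ, true_and]
    constructor
    · rintro ⟨l, hl⟩
      rcases eq_or_ne l j with h | hne
      · subst h
        refine ⟨l, Finset.sdiff_subset (s := A l) (t := A i) ?_⟩
        rw [← hv]; simpa using hl
      · exact ⟨l, by simpa [Function.update_of_ne hne] using hl⟩
    · rintro ⟨l, hl⟩
      rcases eq_or_ne l j with h | hne
      · subst h
        by_cases hyi : y ∈ A i
        · exact ⟨i, by simpa [Function.update_of_ne hij] using hyi⟩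
        · refine ⟨l, by simp only [Function.update_self, hv, Finset.mem_sdiff]; exact ⟨hl, hyi⟩⟩
      · exact ⟨l, by simpa [Function.update_of_ne hne] using hl⟩
  · have hupd : ∀ l, f (Function.update A j v l)
        = Function.update (fun l => f (A l)) j (f v) l := fun l =>
      Function.apply_update (fun _ s => f s) A j v l
    have h1 : ∑ l, f (Function.update A j v l)
        = f v + ∑ l ∈ Finset.univ \ {j}, f (A l) := by
      rw [Finset.sum_congr rfl fun l _ => hupd l]
      exact Finset.sum_update_of_mem (Finset.mem_univ j) _ _
    have h2 : ∑ l, f (A l) = f (A j) + ∑ l ∈ Finset.univ \ {j}, f (A l) := by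
      conv_lhs => rw [← Function.update_eq_self j (fun l => f (A l))]
      exact Finset.sum_update_of_mem (Finset.mem_univ j) _ _
    rw [h1, h2]
    exact add_le_add_left hf _
  · have hupd : ∀ l, (Function.update A j v l).card
        = Function.update (fun l => (A l).card) j v.card l := fun l =>
      Function.apply_update (fun _ s => s.card) A j v l
    have h1 : ∑ l, (Function.update A j v l).card
        = v.card + ∑ l ∈ Finset.univ \ {j}, (A l).card := by
      rw [Finset.sum_congr rfl fun l _ => hupd l]
      exact Finset.sum_update_of_mem (Finset.mem_univ j) _ _
    have h2 : ∑ l, (A l).card = (A j).card + ∑ l ∈ Finset.univ \ {j}, (A l).card := by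
      conv_lhs => rw [← Function.update_eq_self j (fun l => (A l).card)]
      exact Finset.sum_update_of_mem (Finset.mem_univ j) _ _
    rw [h1, h2]
    have hlt : v.card < (A j).card := by
      apply Finset.card_lt_card
      refine (Finset.ssubset_iff_of_subset Finset.sdiff_subset).mpr ⟨x, hxj, ?_⟩
      simp [hv, hxi]
    omega

/-- **Uncrossing lemma for symmetric submodular functions.**
Let `f` be a symmetric submodular set function over a finite ground set `V`
and let `A_1, …, A_k ⊆ V`. Then there exist sets `A'_1, …, A'_k` such that
(i) `A'_i ⊆ A_i` for each `i`, (ii) the `A'_i` are mutually disjoint,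
(iii) `⋃_i A'_i = ⋃_i A_i`, and (iv) `∑_i f(A'_i) ≤ ∑_i f(A_i)`. -/
theorem uncross_symmetric_submodular
    {V : Type*} [Fintype V] [DecidableEq V] (f : Finset V → ℝ)
    (hsub : ∀ A B : Finset V, f A + f B ≥ f (A ∪ B) + f (A ∩ B))
    (hsym : ∀ A : Finset V, f A = f (Finset.univ \ A))
    (k : ℕ) (A : Fin k → Finset V) :
    ∃ A' : Fin k → Finset V,
      (∀ i, A' i ⊆ A i) ∧
      (∀ i j, i ≠ j → Disjoint (A' i) (A' j)) ∧
      (Finset.univ.biUnion A' = Finset.univ.biUnion A) ∧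
      (∑ i, f (A' i) ≤ ∑ i, f (A i)) := by
  classical
  suffices h : ∀ n (A : Fin k → Finset V), (∑ i, (A i).card) ≤ n →
      ∃ A' : Fin k → Finset V,
        (∀ i, A' i ⊆ A i) ∧
        (∀ i j, i ≠ j → Disjoint (A' i) (A' j)) ∧
        (Finset.univ.biUnion A' = Finset.univ.biUnion A) ∧
        (∑ i, f (A' i) ≤ ∑ i, f (A i)) by
    exact h _ A le_rfl
  intro n
  induction n with
  | zero =>
    intro A hA
    refine ⟨A, fun i => subset_rfl, fun i j _ => ?_, rfl, le_rfl⟩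
    have h0 : (A i).card ≤ 0 :=
      le_trans (Finset.single_le_sum (f := fun l => (A l).card)
        (fun l _ => Nat.zero_le _) (Finset.mem_univ i)) hA
    simp [Finset.card_eq_zero.mp (Nat.le_zero.mp h0)]
  | succ n ih =>
    intro A hA
    by_cases hd : ∀ i j, i ≠ j → Disjoint (A i) (A j)
    · exact ⟨A, fun i => subset_rfl, hd, rfl, le_rfl⟩
    · push_neg at hd
      obtain ⟨i, j, hij, hnd⟩ := hd
      obtain ⟨x, hxi, hxj⟩ := Finset.not_disjoint_iff.mp hnd
      have hkey := uncross_key f hsub hsym (A i) (A j)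
      have hstep : ∃ B : Fin k → Finset V, (∀ l, B l ⊆ A l) ∧
          (Finset.univ.biUnion B = Finset.univ.biUnion A) ∧
          (∑ l, f (B l) ≤ ∑ l, f (A l)) ∧
          (∑ l, (B l).card < ∑ l, (A l).card) := by
        rcases le_or_gt (f (A j \ A i)) (f (A j)) with h | h
        · exact uncross_step f A i j hij x hxi hxj h
        · exact uncross_step f A j i hij.symm x hxj hxi (by linarith)
      obtain ⟨B, hBsub, hBun, hBsum, hBcard⟩ := hstep
      obtain ⟨A', h1, h2, h3, h4⟩ := ih B (by omega)
      exact ⟨A', fun l => (h1 l).trans (hBsub l), h2, h3.trans hBun, h4.trans hBsum⟩
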